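/- (Open-loop bound, geometric decay.) Under the same hypotheses, there exist constants ρ := 1 − λ_min(QP^{-1}) ∈ [0,1) and c := (1−ρ)^{-1}(1−ρ^N)c₁ > 0 such that for every x ∈ ℝ^n, every u ∈ F_W(x), and the associated predicted states x'_i: V(x'_i) ≤ ρ^i V(x) + c · x^Tℰx for all i = 1,…,N. -/

import Mathlib

open Matrix Filter Topology

noncomputable section

/-- The block lower-triangular matrix `Φ ∈ ℝ^{nN×N}` whose (i,j)-th `n×1` block
(0-indexed) is `A^{i-j}B` for `i ≥ j` and `0` otherwise. -/
def Phi (n N : ℕ) (A : Matrix (Fin n) (Fin n) ℝ) (B : Fin n → ℝ) :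
    Matrix (Fin N × Fin n) (Fin N) ℝ :=
  Matrix.of fun p j =>
    if (j : ℕ) ≤ (p.1 : ℕ) then ((A ^ ((p.1 : ℕ) - (j : ℕ))) *ᵥ B) p.2 else 0

/-- `Φ_i ∈ ℝ^{n×N}`, the (i+1)-th row block of `Φ`,
i.e. `Φ_i = [A^i B, A^{i-1} B, …, B, 0, …, 0]`. -/
def PhiBlock (n N : ℕ) (A : Matrix (Fin n) (Fin n) ℝ) (B : Fin n → ℝ) (i : Fin N) :
    Matrix (Fin n) (Fin N) ℝ :=
  Matrix.of fun r j => Phi n N A B (i, r) j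

/-- `Υ := [A; A²; …; A^N] ∈ ℝ^{nN×n}`. -/
def Upsilon (n N : ℕ) (A : Matrix (Fin n) (Fin n) ℝ) :
    Matrix (Fin N × Fin n) (Fin n) ℝ :=
  Matrix.of fun p s => (A ^ ((p.1 : ℕ) + 1)) p.2 s

/-- `Q̄ := blockdiag(Q, …, Q, P)` with `N−1` copies of `Q` followed by `P`. -/
def Qbar (n N : ℕ) (Q P : Matrix (Fin n) (Fin n) ℝ) :
    Matrix (Fin N × Fin n) (Fin N × Fin n) ℝ :=
  Matrix.of fun p q =>
    if p.1 = q.1 then (if (p.1 : ℕ) = N - 1 then P else Q) p.2 q.2 else 0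

/-- The cost `u ↦ ‖Gu − Hx‖₂²`. -/
def Jcost {n N : ℕ} (G : Matrix (Fin N × Fin n) (Fin N) ℝ)
    (H : Matrix (Fin N × Fin n) (Fin n) ℝ) (x : Fin n → ℝ) (u : Fin N → ℝ) : ℝ :=
  (G *ᵥ u - H *ᵥ x) ⬝ᵥ (G *ᵥ u - H *ᵥ x)

/-- The feasible set `F_W(x) := {u ∈ ℝ^N : ‖Gu − Hx‖₂² ≤ xᵀWx}`. -/
def Feas {n N : ℕ} (G : Matrix (Fin N × Fin n) (Fin N) ℝ)
    (H : Matrix (Fin N × Fin n) (Fin n) ℝ) (W : Matrix (Fin n) (Fin n) ℝ)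
    (x : Fin n → ℝ) : Set (Fin N → ℝ) :=
  {u | Jcost G H x u ≤ x ⬝ᵥ (W *ᵥ x)}

/-- The least-squares solution `u*(x) := (GᵀG)⁻¹GᵀHx`. -/
def uStar {n N : ℕ} (G : Matrix (Fin N × Fin n) (Fin N) ℝ)
    (H : Matrix (Fin N × Fin n) (Fin n) ℝ) (x : Fin n → ℝ) : Fin N → ℝ :=
  ((Gᵀ * G)⁻¹ * Gᵀ * H) *ᵥ x

/-- The LQ gain (row vector) `K := −(BᵀPB)⁻¹BᵀPA`. -/
def Kgain {n : ℕ} (A P : Matrix (Fin n) (Fin n) ℝ) (B : Fin n → ℝ) : Fin n → ℝ :=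
  -((B ⬝ᵥ (P *ᵥ B))⁻¹ • Matrix.vecMul B (P * A))

/-- The closed-loop matrix `A + BK`. -/
def Acl {n : ℕ} (A P : Matrix (Fin n) (Fin n) ℝ) (B : Fin n → ℝ) :
    Matrix (Fin n) (Fin n) ℝ :=
  A + Matrix.vecMulVec B (Kgain A P B)

/-- The discrete algebraic Riccati equation
`P = AᵀPA − AᵀPB(BᵀPB)⁻¹BᵀPA + Q`. -/
def Riccati {n : ℕ} (A P Q : Matrix (Fin n) (Fin n) ℝ) (B : Fin n → ℝ) : Prop :=
  P = Aᵀ * P * A -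
      (B ⬝ᵥ (P *ᵥ B))⁻¹ •
        Matrix.vecMulVec (Aᵀ *ᵥ (P *ᵥ B)) (Matrix.vecMul B (P * A)) + Q

/-- The Lyapunov function `V(x) := xᵀPx`. -/
def Vfun {n : ℕ} (P : Matrix (Fin n) (Fin n) ℝ) (x : Fin n → ℝ) : ℝ :=
  x ⬝ᵥ (P *ᵥ x)

/-- `c₁ := max_{i=0,…,N−1} λ_max(Φᵢᵀ P Φᵢ (GᵀG)⁻¹)`. -/
def c1const (n N : ℕ) (A P : Matrix (Fin n) (Fin n) ℝ) (B : Fin n → ℝ)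
    (G : Matrix (Fin N × Fin n) (Fin N) ℝ) : ℝ :=
  ⨆ i : Fin N,
    sSup (spectrum ℝ ((PhiBlock n N A B i)ᵀ * P * PhiBlock n N A B i * (Gᵀ * G)⁻¹))

/-- `ρ := 1 − λ_min(QP⁻¹)`. -/
def rhoConst {n : ℕ} (Q P : Matrix (Fin n) (Fin n) ℝ) : ℝ :=
  1 - sInf (spectrum ℝ (Q * P⁻¹))

/-- `c := (1−ρ)⁻¹(1−ρ^N)c₁`. -/
def cConst (n N : ℕ) (A P Q : Matrix (Fin n) (Fin n) ℝ) (B : Fin n → ℝ)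
    (G : Matrix (Fin N × Fin n) (Fin N) ℝ) : ℝ :=
  (1 - rhoConst Q P)⁻¹ * (1 - rhoConst Q P ^ N) * c1const n N A P B G

/-- `w_i := ε_i − K Σ_{l=0}^{i−1} A^{i−1−l} B ε_l`. -/
def wErr {n N : ℕ} (A P : Matrix (Fin n) (Fin n) ℝ) (B : Fin n → ℝ)
    (ε : Fin N → ℝ) (i : Fin N) : ℝ :=
  ε i - Kgain A P B ⬝ᵥ
    (∑ l ∈ Finset.univ.filter (fun l : Fin N => (l : ℕ) < (i : ℕ)),
      ε l • ((A ^ ((i : ℕ) - 1 - (l : ℕ))) *ᵥ B))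

/-- The controllability matrix `[B, AB, …, A^{n−1}B]`. -/
def Ctrb {n : ℕ} (A : Matrix (Fin n) (Fin n) ℝ) (B : Fin n → ℝ) :
    Matrix (Fin n) (Fin n) ℝ :=
  Matrix.of fun r j => ((A ^ (j : ℕ)) *ᵥ B) r


theorem my_dp {m k : Type*} [Fintype m] [Fintype k] (M : Matrix m k ℝ) (a : k → ℝ) (b : m → ℝ) :
    (M *ᵥ a) ⬝ᵥ b = a ⬝ᵥ (Mᵀ *ᵥ b) := by
  rw [dotProduct_comm, dotProduct_mulVec, ← mulVec_transpose, dotProduct_comm]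

theorem my_herm_transpose {m : Type*} [Fintype m] {M : Matrix m m ℝ} (hM : M.IsHermitian) :
    Mᵀ = M := by
  rw [← conjTranspose_eq_transpose_of_trivial]; exact hM

theorem my_sym_dp {m : Type*} [Fintype m] {M : Matrix m m ℝ} (hM : M.IsHermitian)
    (a b : m → ℝ) : a ⬝ᵥ (M *ᵥ b) = b ⬝ᵥ (M *ᵥ a) := by
  calc a ⬝ᵥ (M *ᵥ b) = (Mᵀ *ᵥ a) ⬝ᵥ b := by rw [my_dp, transpose_transpose]
  _ = b ⬝ᵥ (M *ᵥ a) := by rw [my_herm_transpose hM, dotProduct_comm]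

theorem my_vecMulVec_mulVec {m : ℕ} (w v z : Fin m → ℝ) :
    Matrix.vecMulVec w v *ᵥ z = (v ⬝ᵥ z) • w := by
  ext i
  simp [mulVec, vecMulVec_apply, dotProduct, Finset.sum_mul, Finset.mul_sum, mul_assoc,
    mul_comm, mul_left_comm]


theorem my_step_quad {n : ℕ} {A P Q : Matrix (Fin n) (Fin n) ℝ} {B : Fin n → ℝ}
    (hP : P.IsHermitian) (hRic : Riccati A P Q B) (hR : B ⬝ᵥ (P *ᵥ B) ≠ 0)
    (z : Fin n → ℝ) (a : ℝ) :
    (A *ᵥ z + a • B) ⬝ᵥ (P *ᵥ (A *ᵥ z + a • B)) =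
      z ⬝ᵥ (P *ᵥ z) - z ⬝ᵥ (Q *ᵥ z) +
        (B ⬝ᵥ (P *ᵥ B)) * (a + (B ⬝ᵥ (P *ᵥ B))⁻¹ * (B ⬝ᵥ (P *ᵥ (A *ᵥ z))))^2 := by
  have hz : z ⬝ᵥ (P *ᵥ z) =
      (A *ᵥ z) ⬝ᵥ (P *ᵥ (A *ᵥ z))
        - (B ⬝ᵥ (P *ᵥ B))⁻¹ * ((B ⬝ᵥ (P *ᵥ (A *ᵥ z))) * (B ⬝ᵥ (P *ᵥ (A *ᵥ z))))
        + z ⬝ᵥ (Q *ᵥ z) := by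
    conv_lhs => rw [hRic]
    rw [add_mulVec, sub_mulVec, smul_mulVec, my_vecMulVec_mulVec]
    rw [dotProduct_add, dotProduct_sub, dotProduct_smul, dotProduct_smul]
    congr 2
    · rw [mul_assoc, ← mulVec_mulVec, ← mulVec_mulVec, ← my_dp A z]
    · rw [smul_eq_mul, smul_eq_mul]
      have h1 : Matrix.vecMul B (P * A) ⬝ᵥ z = B ⬝ᵥ (P *ᵥ (A *ᵥ z)) := by
        rw [← dotProduct_mulVec, mulVec_mulVec]
      have h2 : z ⬝ᵥ (Aᵀ *ᵥ (P *ᵥ B)) = B ⬝ᵥ (P *ᵥ (A *ᵥ z))  := by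
        rw [← my_dp, my_sym_dp hP]
      rw [h1, h2]
  have hs : (A *ᵥ z) ⬝ᵥ (P *ᵥ (a • B)) = a * (B ⬝ᵥ (P *ᵥ (A *ᵥ z))) := by
    rw [mulVec_smul, dotProduct_smul, smul_eq_mul, my_sym_dp hP]
  have hs2 : (a • B) ⬝ᵥ (P *ᵥ (A *ᵥ z)) = a * (B ⬝ᵥ (P *ᵥ (A *ᵥ z))) := by
    rw [smul_dotProduct, smul_eq_mul]
  have hs3 : (a • B) ⬝ᵥ (P *ᵥ (a • B)) = a * a * (B ⬝ᵥ (P *ᵥ B)) := by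
    rw [mulVec_smul, dotProduct_smul, smul_dotProduct, smul_eq_mul, smul_eq_mul]; ring
  rw [mulVec_add, dotProduct_add, add_dotProduct, add_dotProduct, hs, hs2, hs3, hz]
  field_simp
  ring

theorem my_pq_nonneg {n : ℕ} {A P Q : Matrix (Fin n) (Fin n) ℝ} {B : Fin n → ℝ}
    (hP : P.PosSemidef) (hRic : Riccati A P Q B) (hR : B ⬝ᵥ (P *ᵥ B) ≠ 0)
    (z : Fin n → ℝ) : 0 ≤ z ⬝ᵥ (P *ᵥ z) - z ⬝ᵥ (Q *ᵥ z) := by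
  have h := my_step_quad hP.1 hRic hR z (-((B ⬝ᵥ (P *ᵥ B))⁻¹ * (B ⬝ᵥ (P *ᵥ (A *ᵥ z)))))
  simp only [neg_add_cancel] at h
  have h0 := hP.dotProduct_mulVec_nonneg (A *ᵥ z + (-((B ⬝ᵥ (P *ᵥ B))⁻¹ * (B ⬝ᵥ (P *ᵥ (A *ᵥ z))))) • B)
  simp only [star_trivial] at h0
  rw [h] at h0
  simpa using h0

theorem my_master {n N : ℕ} (hN : 1 ≤ N) {A P Q : Matrix (Fin n) (Fin n) ℝ} {B : Fin n → ℝ}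
    (hP : P.IsHermitian) (hRic : Riccati A P Q B) (hR : B ⬝ᵥ (P *ᵥ B) ≠ 0)
    (d : ℕ → Fin n → ℝ) (v : Fin N → ℝ)
    (hd : ∀ k : Fin N, d ((k : ℕ) + 1) = A *ᵥ d (k : ℕ) + v k • B) :
    ∑ i : Fin N, (d ((i : ℕ) + 1)) ⬝ᵥ ((if (i : ℕ) = N - 1 then P else Q) *ᵥ d ((i : ℕ) + 1))
      = d 0 ⬝ᵥ (P *ᵥ d 0) - d 0 ⬝ᵥ (Q *ᵥ d 0) +
        ∑ k : Fin N, (B ⬝ᵥ (P *ᵥ B)) *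
          (v k + (B ⬝ᵥ (P *ᵥ B))⁻¹ * (B ⬝ᵥ (P *ᵥ (A *ᵥ d (k : ℕ)))))^2 := by
  set p : ℕ → ℝ := fun k => d k ⬝ᵥ (P *ᵥ d k) with hp
  set q : ℕ → ℝ := fun k => d k ⬝ᵥ (Q *ᵥ d k) with hq
  set r : ℕ → ℝ := fun k => if h : k < N then
      (B ⬝ᵥ (P *ᵥ B)) * (v ⟨k, h⟩ + (B ⬝ᵥ (P *ᵥ B))⁻¹ * (B ⬝ᵥ (P *ᵥ (A *ᵥ d k))))^2
    else 0 with hr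
  have hkey : ∀ k, k < N → p (k + 1) = p k - q k + r k := by
    intro k hk
    have := my_step_quad hP hRic hR (d k) (v ⟨k, hk⟩)
    rw [← hd ⟨k, hk⟩] at this
    simp only [hp, hq, hr, dif_pos hk]
    exact this
  have hL : ∀ m, m ≤ N → p m + ∑ k ∈ Finset.range m, q k = p 0 + ∑ k ∈ Finset.range m, r k := by
    intro m
    induction m with
    | zero => simp
    | succ m ih =>
      intro hm
      have ihm := ih (Nat.le_of_succ_le hm)
      rw [Finset.sum_range_succ, Finset.sum_range_succ, hkey m hm]
      linarith
  -- convert LHS to range sum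
  have hlhs : ∑ i : Fin N, (d ((i : ℕ) + 1)) ⬝ᵥ ((if (i : ℕ) = N - 1 then P else Q) *ᵥ d ((i : ℕ) + 1))
      = ∑ k ∈ Finset.range N, (if k = N - 1 then p (k + 1) else q (k + 1)) := by
    rw [← Fin.sum_univ_eq_sum_range]
    refine Finset.sum_congr rfl fun i _ => ?_
    by_cases h : (i : ℕ) = N - 1 <;> simp [h, hp, hq]
  have hrhs : ∑ k : Fin N, (B ⬝ᵥ (P *ᵥ B)) *
        (v k + (B ⬝ᵥ (P *ᵥ B))⁻¹ * (B ⬝ᵥ (P *ᵥ (A *ᵥ d (k : ℕ)))))^2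
      = ∑ k ∈ Finset.range N, r k := by
    rw [← Fin.sum_univ_eq_sum_range]
    refine Finset.sum_congr rfl fun k _ => ?_
    simp [hr, k.isLt]
  rw [hlhs, hrhs]
  obtain ⟨N', rfl⟩ : ∃ N', N = N' + 1 := ⟨N - 1, (Nat.succ_pred_eq_of_pos hN).symm⟩
  have hNN : N' + 1 - 1 = N' := rfl
  rw [Finset.sum_range_succ]
  have h1 : ∀ k ∈ Finset.range N', (if k = N' + 1 - 1 then p (k + 1) else q (k + 1)) = q (k + 1) := by
    intro k hk
    rw [if_neg]
    exact Nat.ne_of_lt (by simpa using Finset.mem_range.mp hk)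
  rw [Finset.sum_congr rfl h1, if_pos hNN.symm]
  have h2 : ∑ k ∈ Finset.range N', q (k + 1) = ∑ k ∈ Finset.range (N' + 1), q k - q 0 := by
    rw [Finset.sum_range_succ']; ring
  have := hL (N' + 1) le_rfl
  rw [Finset.sum_range_succ] at this ⊢
  rw [h2]
  rw [Finset.sum_range_succ]
  have hp0 : d 0 ⬝ᵥ (P *ᵥ d 0) = p 0 := rfl
  have hq0 : d 0 ⬝ᵥ (Q *ᵥ d 0) = q 0 := rfl
  rw [hp0, hq0]
  rw [Finset.sum_range_succ] at this
  linarith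



theorem my_psum_succ {n N : ℕ} (A : Matrix (Fin n) (Fin n) ℝ) (B : Fin n → ℝ)
    (v : Fin N → ℝ) (m : ℕ) (hm : m + 1 < N) :
    (∑ j : Fin N, if (j : ℕ) ≤ m + 1 then v j • ((A ^ (m + 1 - (j : ℕ))) *ᵥ B) else 0)
      = A *ᵥ (∑ j : Fin N, if (j : ℕ) ≤ m then v j • ((A ^ (m - (j : ℕ))) *ᵥ B) else 0)
        + v ⟨m + 1, hm⟩ • B := by
  have hmv : A *ᵥ (∑ j : Fin N, if (j : ℕ) ≤ m then v j • ((A ^ (m - (j : ℕ))) *ᵥ B) else 0)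
      = ∑ j : Fin N, if (j : ℕ) ≤ m then v j • ((A ^ (m + 1 - (j : ℕ))) *ᵥ B) else 0 := by
    rw [show ∀ w : Fin n → ℝ, A *ᵥ w = A.mulVecLin w from fun _ => rfl]
    rw [map_sum]
    refine Finset.sum_congr rfl fun j _ => ?_
    by_cases h : (j : ℕ) ≤ m
    · rw [if_pos h, if_pos h]
      simp only [mulVecLin_apply, mulVec_smul, mulVec_mulVec]
      rw [show m + 1 - (j : ℕ) = (m - (j : ℕ)) + 1 by omega, pow_succ']
    · rw [if_neg h, if_neg h]
      simp
  rw [hmv]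
  have hsplit : ∀ j : Fin N,
      (if (j : ℕ) ≤ m + 1 then v j • ((A ^ (m + 1 - (j : ℕ))) *ᵥ B) else 0)
        = (if (j : ℕ) ≤ m then v j • ((A ^ (m + 1 - (j : ℕ))) *ᵥ B) else 0)
          + (if (j : ℕ) = m + 1 then v j • B else 0) := by
    intro j
    rcases lt_trichotomy (j : ℕ) (m + 1) with h | h | h
    · rw [if_pos (by omega), if_pos (by omega), if_neg (by omega), add_zero]
    · rw [if_pos (by omega), if_neg (by omega), if_pos h, zero_add, h]
      simp
    · rw [if_neg (by omega), if_neg (by omega), if_neg (by omega), add_zero]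
  rw [Finset.sum_congr rfl fun j _ => hsplit j, Finset.sum_add_distrib]
  congr 1
  rw [Finset.sum_eq_single (⟨m + 1, hm⟩ : Fin N)]
  · rw [if_pos rfl]
  · intro j _ hj
    rw [if_neg fun h => hj (Fin.ext h)]
  · intro h
    exact absurd (Finset.mem_univ _) h

theorem my_blocks {n N : ℕ} (A : Matrix (Fin n) (Fin n) ℝ) (B : Fin n → ℝ)
    (v : Fin N → ℝ) (d : ℕ → Fin n → ℝ)
    (hd : ∀ k : Fin N, d ((k : ℕ) + 1) = A *ᵥ d (k : ℕ) + v k • B) :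
    ∀ m : ℕ, ∀ hm : m < N,
      (∑ j : Fin N, if (j : ℕ) ≤ m then v j • ((A ^ (m - (j : ℕ))) *ᵥ B) else 0)
        + (A ^ (m + 1)) *ᵥ d 0 = d (m + 1) := by
  intro m
  induction m with
  | zero =>
    intro hm
    have h0 : (∑ j : Fin N, if (j : ℕ) ≤ 0 then v j • ((A ^ (0 - (j : ℕ))) *ᵥ B) else 0)
        = v ⟨0, hm⟩ • B := by
      rw [Finset.sum_eq_single (⟨0, hm⟩ : Fin N)]
      · simp
      · intro j _ hj
        rw [if_neg fun h => hj (Fin.ext (Nat.le_zero.mp h))]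
      · intro h
        exact absurd (Finset.mem_univ _) h
    rw [h0, pow_one, hd ⟨0, hm⟩, add_comm]
  | succ m ih =>
    intro hm
    rw [my_psum_succ A B v m hm]
    have h2 : (A ^ (m + 1 + 1)) *ᵥ d 0 = A *ᵥ ((A ^ (m + 1)) *ᵥ d 0) := by
      rw [mulVec_mulVec, ← pow_succ']
    rw [h2, hd ⟨m + 1, hm⟩]
    have ihm := ih (by omega)
    calc A *ᵥ (∑ j : Fin N, if (j : ℕ) ≤ m then v j • ((A ^ (m - (j : ℕ))) *ᵥ B) else 0)
          + v ⟨m + 1, hm⟩ • B + A *ᵥ ((A ^ (m + 1)) *ᵥ d 0)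
        = A *ᵥ ((∑ j : Fin N, if (j : ℕ) ≤ m then v j • ((A ^ (m - (j : ℕ))) *ᵥ B) else 0)
            + (A ^ (m + 1)) *ᵥ d 0) + v ⟨m + 1, hm⟩ • B := by
          rw [mulVec_add]; abel
      _ = A *ᵥ d (m + 1) + v ⟨m + 1, hm⟩ • B := by rw [ihm]

theorem my_phi_apply {n N : ℕ} (A : Matrix (Fin n) (Fin n) ℝ) (B : Fin n → ℝ)
    (v : Fin N → ℝ) (i : Fin N) (r : Fin n) :
    (Phi n N A B *ᵥ v) (i, r)
      = (∑ j : Fin N, if (j : ℕ) ≤ (i : ℕ) then v j • ((A ^ ((i : ℕ) - (j : ℕ))) *ᵥ B) else 0) r := by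
  simp only [mulVec, dotProduct, Phi, Matrix.of_apply, Finset.sum_apply, Pi.smul_apply,
    smul_eq_mul]
  refine Finset.sum_congr rfl fun j _ => ?_
  by_cases h : (j : ℕ) ≤ (i : ℕ)
  · rw [if_pos h, if_pos h]
    simp [mulVec, dotProduct, Finset.mul_sum, mul_comm]
  · rw [if_neg h, if_neg h]
    simp

theorem my_blocks_full {n N : ℕ} (A : Matrix (Fin n) (Fin n) ℝ) (B : Fin n → ℝ)
    (v : Fin N → ℝ) (d : ℕ → Fin n → ℝ)
    (hd : ∀ k : Fin N, d ((k : ℕ) + 1) = A *ᵥ d (k : ℕ) + v k • B) (i : Fin N) (r : Fin n) :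
    (Phi n N A B *ᵥ v + Upsilon n N A *ᵥ d 0) (i, r) = d ((i : ℕ) + 1) r := by
  have hU : (Upsilon n N A *ᵥ d 0) (i, r) = ((A ^ ((i : ℕ) + 1)) *ᵥ d 0) r := by
    simp [Upsilon, mulVec, dotProduct]
  have := congrFun (my_blocks A B v d hd (i : ℕ) i.isLt) r
  simp only [Pi.add_apply] at this ⊢
  rw [my_phi_apply, hU, this]


theorem my_qbar_mulVec {n N : ℕ} (Q P : Matrix (Fin n) (Fin n) ℝ)
    (z : Fin N × Fin n → ℝ) (i : Fin N) (r : Fin n) :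
    (Qbar n N Q P *ᵥ z) (i, r)
      = ((if (i : ℕ) = N - 1 then P else Q) *ᵥ (fun s => z (i, s))) r := by
  simp only [mulVec, dotProduct, Qbar, Matrix.of_apply, Fintype.sum_prod_type, ite_mul, zero_mul]
  rw [Finset.sum_eq_single i]
  · simp
  · intro j _ hj
    simp [Ne.symm hj]
  · intro h
    exact absurd (Finset.mem_univ _) h

theorem my_qbar_quad {n N : ℕ} (Q P : Matrix (Fin n) (Fin n) ℝ) (z : Fin N × Fin n → ℝ) :
    z ⬝ᵥ (Qbar n N Q P *ᵥ z)
      = ∑ i : Fin N,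
          (fun s => z (i, s)) ⬝ᵥ ((if (i : ℕ) = N - 1 then P else Q) *ᵥ (fun s => z (i, s))) := by
  rw [dotProduct, Fintype.sum_prod_type]
  refine Finset.sum_congr rfl fun i _ => ?_
  rw [dotProduct]
  refine Finset.sum_congr rfl fun r _ => ?_
  rw [my_qbar_mulVec]

theorem my_isHermitian_of_transpose {m : Type*} [Fintype m] {M : Matrix m m ℝ}
    (h : Mᵀ = M) : M.IsHermitian := by
  rw [Matrix.IsHermitian, conjTranspose_eq_transpose_of_trivial]; exact h

theorem my_quad_decomp {m : ℕ} {M : Matrix (Fin m) (Fin m) ℝ} (hM : M.IsHermitian)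
    (z : Fin m → ℝ) :
    ∃ y : Fin m → ℝ,
      z ⬝ᵥ (M *ᵥ z) = ∑ j, hM.eigenvalues j * (y j) ^ 2 ∧ z ⬝ᵥ z = ∑ j, (y j) ^ 2 := by
  set U : Matrix (Fin m) (Fin m) ℝ := (Matrix.IsHermitian.eigenvectorUnitary hM : Matrix (Fin m) (Fin m) ℝ) with hU
  have hUT : star U = Uᵀ := by
    rw [Matrix.star_eq_conjTranspose, conjTranspose_eq_transpose_of_trivial]
  have hUU : U * Uᵀ = 1 := by
    rw [← hUT]
    exact (Matrix.mem_unitaryGroup_iff).mp (Matrix.IsHermitian.eigenvectorUnitary hM).2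
  refine ⟨Uᵀ *ᵥ z, ?_, ?_⟩
  · have hspec := Matrix.IsHermitian.spectral_theorem hM
    have hD : Matrix.diagonal (RCLike.ofReal ∘ hM.eigenvalues) =
        Matrix.diagonal hM.eigenvalues := by
      congr 1
    conv_lhs => rw [hspec]
    simp only [Unitary.conjStarAlgAut_apply, Unitary.coe_star]
    rw [← hU, hUT, hD, ← mulVec_mulVec, ← mulVec_mulVec]
    have h1 : z ⬝ᵥ (U *ᵥ (Matrix.diagonal hM.eigenvalues *ᵥ (Uᵀ *ᵥ z)))
        = (Uᵀ *ᵥ z) ⬝ᵥ (Matrix.diagonal hM.eigenvalues *ᵥ (Uᵀ *ᵥ z)) := by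
      rw [dotProduct_comm, my_dp U]
      exact dotProduct_comm _ _
    rw [h1, dotProduct]
    refine Finset.sum_congr rfl fun j _ => ?_
    rw [Matrix.mulVec_diagonal]
    ring
  · have : (Uᵀ *ᵥ z) ⬝ᵥ (Uᵀ *ᵥ z) = z ⬝ᵥ z := by
      rw [my_dp, transpose_transpose, mulVec_mulVec, hUU, one_mulVec]
    rw [← this, dotProduct]
    refine Finset.sum_congr rfl fun j _ => ?_
    ring

theorem my_spec_eq {m : ℕ} {M : Matrix (Fin m) (Fin m) ℝ} (hM : M.IsHermitian) :
    spectrum ℝ M = Set.range hM.eigenvalues :=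
  hM.spectrum_real_eq_range_eigenvalues

theorem my_sSup_mem {m : ℕ} (hm : 0 < m) {M : Matrix (Fin m) (Fin m) ℝ}
    (hM : M.IsHermitian) : sSup (spectrum ℝ M) ∈ Set.range hM.eigenvalues := by
  rw [my_spec_eq hM]
  haveI : Nonempty (Fin m) := ⟨⟨0, hm⟩⟩
  exact (Set.range_nonempty _).csSup_mem (Set.finite_range _)

theorem my_sInf_mem {m : ℕ} (hm : 0 < m) {M : Matrix (Fin m) (Fin m) ℝ}
    (hM : M.IsHermitian) : sInf (spectrum ℝ M) ∈ Set.range hM.eigenvalues := by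
  rw [my_spec_eq hM]
  haveI : Nonempty (Fin m) := ⟨⟨0, hm⟩⟩
  exact (Set.range_nonempty _).csInf_mem (Set.finite_range _)

theorem my_eig_le_sSup {m : ℕ} {M : Matrix (Fin m) (Fin m) ℝ}
    (hM : M.IsHermitian) (j : Fin m) : hM.eigenvalues j ≤ sSup (spectrum ℝ M) := by
  rw [my_spec_eq hM]
  exact le_csSup (Set.finite_range _).bddAbove (Set.mem_range_self j)

theorem my_sInf_le_eig {m : ℕ} {M : Matrix (Fin m) (Fin m) ℝ}
    (hM : M.IsHermitian) (j : Fin m) : sInf (spectrum ℝ M) ≤ hM.eigenvalues j := by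
  rw [my_spec_eq hM]
  exact csInf_le (Set.finite_range _).bddBelow (Set.mem_range_self j)

theorem my_quad_le_sSup {m : ℕ} {M : Matrix (Fin m) (Fin m) ℝ}
    (hM : M.IsHermitian) (z : Fin m → ℝ) :
    z ⬝ᵥ (M *ᵥ z) ≤ sSup (spectrum ℝ M) * (z ⬝ᵥ z) := by
  obtain ⟨y, h1, h2⟩ := my_quad_decomp hM z
  rw [h1, h2, Finset.mul_sum]
  exact Finset.sum_le_sum fun j _ =>
    mul_le_mul_of_nonneg_right (my_eig_le_sSup hM j) (sq_nonneg _)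

theorem my_sInf_le_quad {m : ℕ} {M : Matrix (Fin m) (Fin m) ℝ}
    (hM : M.IsHermitian) (z : Fin m → ℝ) :
    sInf (spectrum ℝ M) * (z ⬝ᵥ z) ≤ z ⬝ᵥ (M *ᵥ z) := by
  obtain ⟨y, h1, h2⟩ := my_quad_decomp hM z
  rw [h1, h2, Finset.mul_sum]
  exact Finset.sum_le_sum fun j _ =>
    mul_le_mul_of_nonneg_right (my_sInf_le_eig hM j) (sq_nonneg _)

open scoped MatrixOrder

/-- conjugation of spectrum by the square root of a positive definite matrix -/
theorem my_spec_conj {m : ℕ} (C : Matrix (Fin m) (Fin m) ℝ) {D : Matrix (Fin m) (Fin m) ℝ}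
    (hD : D.PosDef) :
    spectrum ℝ (C * D⁻¹)
      = spectrum ℝ (((CFC.sqrt D))⁻¹ * C * ((CFC.sqrt D))⁻¹) := by
  set L := (CFC.sqrt D) with hL
  have hLL : L * L = D := CFC.sqrt_mul_sqrt_self D hD.posSemidef.nonneg
  have hdet : IsUnit L.det := by
    have h2 : L.det * L.det = D.det := by rw [← Matrix.det_mul, hLL]
    have := hD.det_pos
    refine isUnit_iff_ne_zero.mpr fun h => ?_
    rw [h, mul_zero] at h2
    linarith [h2 ▸ this]
  have hLunit : IsUnit L := (Matrix.isUnit_iff_isUnit_det L).mpr hdet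
  obtain ⟨u, hu⟩ := hLunit
  have huinv : (↑u⁻¹ : Matrix (Fin m) (Fin m) ℝ) = L⁻¹ := by
    rw [Matrix.coe_units_inv, hu]
  have key : (↑u⁻¹ : Matrix (Fin m) (Fin m) ℝ) * (C * D⁻¹) * (↑u : Matrix (Fin m) (Fin m) ℝ) = L⁻¹ * C * L⁻¹ := by
    rw [huinv, hu, ← hLL, Matrix.mul_inv_rev]
    have hinv : L⁻¹ * L = 1 := Matrix.nonsing_inv_mul L hdet
    calc L⁻¹ * (C * (L⁻¹ * L⁻¹)) * L = L⁻¹ * C * L⁻¹ * (L⁻¹ * L) := by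
          simp only [Matrix.mul_assoc]
      _ = L⁻¹ * C * L⁻¹ := by rw [hinv, Matrix.mul_one]
  rw [← key, spectrum.units_conjugate']


theorem my_sandwich {m : ℕ} {X C : Matrix (Fin m) (Fin m) ℝ} (hX : Xᵀ = X) (z : Fin m → ℝ) :
    (X *ᵥ z) ⬝ᵥ (C *ᵥ (X *ᵥ z)) = z ⬝ᵥ ((X * C * X) *ᵥ z) := by
  rw [mulVec_mulVec, my_dp, hX, mulVec_mulVec, ← Matrix.mul_assoc]

theorem my_sqrt_facts {m : ℕ} {D : Matrix (Fin m) (Fin m) ℝ} (hD : D.PosDef) :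
    (CFC.sqrt D)ᵀ = (CFC.sqrt D) ∧
    (CFC.sqrt D) * (CFC.sqrt D) = D ∧
    (CFC.sqrt D)⁻¹ * (CFC.sqrt D) = 1 ∧
    (CFC.sqrt D) * (CFC.sqrt D)⁻¹ = 1 ∧
    ((CFC.sqrt D)⁻¹)ᵀ = (CFC.sqrt D)⁻¹ := by
  set L := (CFC.sqrt D) with hL
  have hLt : Lᵀ = L := my_herm_transpose (CFC.sqrt_nonneg D).posSemidef.1
  have hLL : L * L = D := CFC.sqrt_mul_sqrt_self D hD.posSemidef.nonneg
  have hdet : IsUnit L.det := by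
    have h2 : L.det * L.det = D.det := by rw [← Matrix.det_mul, hLL]
    have := hD.det_pos
    refine isUnit_iff_ne_zero.mpr fun h => ?_
    rw [h, mul_zero] at h2
    linarith [h2 ▸ this]
  exact ⟨hLt, hLL, Matrix.nonsing_inv_mul L hdet, Matrix.mul_nonsing_inv L hdet,
    by rw [Matrix.transpose_nonsing_inv, hLt]⟩

theorem my_rho_facts {n : ℕ} (hn : 0 < n) {Q P : Matrix (Fin n) (Fin n) ℝ}
    (hQ : Q.PosDef) (hP : P.PosDef)
    (hPQ : ∀ z : Fin n → ℝ, 0 ≤ z ⬝ᵥ (P *ᵥ z) - z ⬝ᵥ (Q *ᵥ z)) :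
    0 ≤ rhoConst Q P ∧ rhoConst Q P < 1 ∧
      ∀ z : Fin n → ℝ,
        z ⬝ᵥ (P *ᵥ z) - z ⬝ᵥ (Q *ᵥ z) ≤ rhoConst Q P * (z ⬝ᵥ (P *ᵥ z)) := by
  obtain ⟨hLt, hLL, hinv1, hinv2, hLit⟩ := my_sqrt_facts hP
  set L := (CFC.sqrt P) with hLdef
  set M' := L⁻¹ * Q * L⁻¹ with hM'def
  have hM'h : M'.IsHermitian := by
    refine my_isHermitian_of_transpose ?_
    rw [hM'def, Matrix.transpose_mul, Matrix.transpose_mul, hLit,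
      my_herm_transpose hQ.1, Matrix.mul_assoc]
  have hspec : spectrum ℝ (Q * P⁻¹) = spectrum ℝ M' := my_spec_conj Q hP
  have hLML : L * M' * L = Q := by
    rw [hM'def]
    calc L * (L⁻¹ * Q * L⁻¹) * L = L * L⁻¹ * Q * (L⁻¹ * L) := by
          simp only [Matrix.mul_assoc]
      _ = Q := by rw [hinv1, hinv2, Matrix.one_mul, Matrix.mul_one]
  have htransQ : ∀ z : Fin n → ℝ, (L *ᵥ z) ⬝ᵥ (M' *ᵥ (L *ᵥ z)) = z ⬝ᵥ (Q *ᵥ z) := by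
    intro z; rw [my_sandwich hLt, hLML]
  have htransP : ∀ z : Fin n → ℝ, (L *ᵥ z) ⬝ᵥ (L *ᵥ z) = z ⬝ᵥ (P *ᵥ z) := by
    intro z
    rw [my_dp, hLt, mulVec_mulVec, hLL]
  -- the decay inequality
  have hdecay : ∀ z : Fin n → ℝ,
      sInf (spectrum ℝ (Q * P⁻¹)) * (z ⬝ᵥ (P *ᵥ z)) ≤ z ⬝ᵥ (Q *ᵥ z) := by
    intro z
    have := my_sInf_le_quad hM'h (L *ᵥ z)
    rw [htransQ, htransP, ← hspec] at this
    exact this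
  have hM'pos : M'.PosDef := by
    refine Matrix.PosDef.of_dotProduct_mulVec_pos hM'h fun z hz => ?_
    have hz' : L⁻¹ *ᵥ z ≠ 0 := by
      intro h
      apply hz
      have : L *ᵥ (L⁻¹ *ᵥ z) = z := by rw [mulVec_mulVec, hinv2, one_mulVec]
      rw [h, mulVec_zero] at this
      exact this.symm
    have h1 : z ⬝ᵥ (M' *ᵥ z) = (L⁻¹ *ᵥ z) ⬝ᵥ (Q *ᵥ (L⁻¹ *ᵥ z)) := (my_sandwich hLit z).symm
    have h2 := hQ.dotProduct_mulVec_pos hz'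
    simp only [star_trivial] at h2 ⊢
    rw [h1]
    exact h2
  have hinfpos : 0 < sInf (spectrum ℝ (Q * P⁻¹)) := by
    rw [hspec]
    obtain ⟨j, hj⟩ := my_sInf_mem hn hM'h
    rw [← hj]
    exact hM'pos.eigenvalues_pos j
  have hinfle : sInf (spectrum ℝ (Q * P⁻¹)) ≤ 1 := by
    set z₀ : Fin n → ℝ := Pi.single ⟨0, hn⟩ 1 with hz₀
    have hz₀ne : z₀ ≠ 0 := by
      intro h
      have := congrFun h ⟨0, hn⟩
      simp [hz₀] at this
    have hp : 0 < z₀ ⬝ᵥ (P *ᵥ z₀) := by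
      have := hP.dotProduct_mulVec_pos hz₀ne
      simpa using this
    have h1 := hdecay z₀
    have h2 := hPQ z₀
    nlinarith
  refine ⟨by rw [rhoConst]; linarith, by rw [rhoConst]; linarith, fun z => ?_⟩
  have h1 := hdecay z
  have hp : 0 ≤ z ⬝ᵥ (P *ᵥ z) := by
    have := hP.posSemidef.dotProduct_mulVec_nonneg z
    simpa using this
  rw [rhoConst]
  nlinarith


theorem my_ratio_sup {m : ℕ} {C D : Matrix (Fin m) (Fin m) ℝ}
    (hC : C.IsHermitian) (hD : D.PosDef) (z : Fin m → ℝ) :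
    z ⬝ᵥ (C *ᵥ z) ≤ sSup (spectrum ℝ (C * D⁻¹)) * (z ⬝ᵥ (D *ᵥ z)) := by
  obtain ⟨hLt, hLL, hinv1, hinv2, hLit⟩ := my_sqrt_facts hD
  set L := (CFC.sqrt D) with hLdef
  set M' := L⁻¹ * C * L⁻¹ with hM'def
  have hM'h : M'.IsHermitian := by
    refine my_isHermitian_of_transpose ?_
    rw [hM'def, Matrix.transpose_mul, Matrix.transpose_mul, hLit,
      my_herm_transpose hC, Matrix.mul_assoc]
  have hspec : spectrum ℝ (C * D⁻¹) = spectrum ℝ M' := my_spec_conj C hD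
  have hLML : L * M' * L = C := by
    rw [hM'def]
    calc L * (L⁻¹ * C * L⁻¹) * L = L * L⁻¹ * C * (L⁻¹ * L) := by
          simp only [Matrix.mul_assoc]
      _ = C := by rw [hinv1, hinv2, Matrix.one_mul, Matrix.mul_one]
  have htransC : (L *ᵥ z) ⬝ᵥ (M' *ᵥ (L *ᵥ z)) = z ⬝ᵥ (C *ᵥ z) := by
    rw [my_sandwich hLt, hLML]
  have htransD : (L *ᵥ z) ⬝ᵥ (L *ᵥ z) = z ⬝ᵥ (D *ᵥ z) := by
    rw [my_dp, hLt, mulVec_mulVec, hLL]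
  have := my_quad_le_sSup hM'h (L *ᵥ z)
  rw [htransC, htransD, ← hspec] at this
  exact this

theorem my_dotProduct_self_nonneg {m : Type*} [Fintype m] (v : m → ℝ) : 0 ≤ v ⬝ᵥ v :=
  Finset.sum_nonneg fun i _ => mul_self_nonneg _

theorem my_dotProduct_self_pos {m : Type*} [Fintype m] {v : m → ℝ} (hv : v ≠ 0) : 0 < v ⬝ᵥ v :=
  lt_of_le_of_ne (my_dotProduct_self_nonneg v)
    fun h => hv (dotProduct_self_eq_zero.mp h.symm)

theorem my_phi_inj {n N : ℕ} (A : Matrix (Fin n) (Fin n) ℝ) {B : Fin n → ℝ} (hB : B ≠ 0)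
    {v : Fin N → ℝ} (h : Phi n N A B *ᵥ v = 0) : v = 0 := by
  have H : ∀ m : ℕ, ∀ j : Fin N, (j : ℕ) = m → v j = 0 := by
    intro m
    induction m using Nat.strong_induction_on with
    | _ m ih =>
      intro j hj
      have hsum : (∑ k : Fin N, if (k : ℕ) ≤ (j : ℕ) then v k • ((A ^ ((j : ℕ) - (k : ℕ))) *ᵥ B) else 0)
          = v j • B := by
        rw [Finset.sum_eq_single j]
        · simp
        · intro k _ hk
          by_cases hkj : (k : ℕ) ≤ (j : ℕ)
          · have hklt : (k : ℕ) < m := by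
              rcases Nat.lt_or_ge (k : ℕ) (j : ℕ) with h' | h'
              · omega
              · exact absurd (Fin.ext (le_antisymm hkj h')) hk
            rw [ih (k : ℕ) hklt k rfl]
            simp
          · rw [if_neg hkj]
        · intro hj'
          exact absurd (Finset.mem_univ _) hj'
      have hvB : v j • B = 0 := by
        funext r
        have h1 := congrFun h (j, r)
        rw [my_phi_apply, congrFun hsum r] at h1
        simpa using h1
      rcases smul_eq_zero.mp hvB with h' | h'
      · exact h'
      · exact absurd h' hB
  funext j
  exact H (j : ℕ) j rfl

theorem my_qbar_posdef {n N : ℕ} (hN : 1 ≤ N) {Q P : Matrix (Fin n) (Fin n) ℝ}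
    (hQ : Q.PosDef) (hP : P.PosDef) : (Qbar n N Q P).PosDef := by
  refine Matrix.PosDef.of_dotProduct_mulVec_pos ?_ ?_
  · refine my_isHermitian_of_transpose ?_
    ext ⟨i, r⟩ ⟨j, s⟩
    simp only [Matrix.transpose_apply, Qbar, Matrix.of_apply]
    by_cases hij : i = j
    · subst hij
      by_cases hN1 : (i : ℕ) = N - 1
      · simp only [hN1, if_pos rfl]
        exact congrFun (congrFun (my_herm_transpose hP.1) r) s
      · simp only [if_pos rfl, if_neg hN1]
        exact congrFun (congrFun (my_herm_transpose hQ.1) r) s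
    · rw [if_neg (Ne.symm hij), if_neg hij]
  · intro z hz
    simp only [star_trivial]
    rw [my_qbar_quad]
    have hex : ∃ i : Fin N, (fun s => z (i, s)) ≠ 0 := by
      by_contra hc
      push_neg at hc
      apply hz
      funext ⟨i, s⟩
      exact congrFun (hc i) s
    obtain ⟨i0, hi0⟩ := hex
    refine Finset.sum_pos' (fun i _ => ?_) ⟨i0, Finset.mem_univ _, ?_⟩
    · by_cases hN1 : (i : ℕ) = N - 1
      · rw [if_pos hN1]
        have := hP.posSemidef.dotProduct_mulVec_nonneg (fun s => z (i, s))
        simpa using this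
      · rw [if_neg hN1]
        have := hQ.posSemidef.dotProduct_mulVec_nonneg (fun s => z (i, s))
        simpa using this
    · by_cases hN1 : (i0 : ℕ) = N - 1
      · rw [if_pos hN1]
        have := hP.dotProduct_mulVec_pos hi0
        simpa using this
      · rw [if_neg hN1]
        have := hQ.dotProduct_mulVec_pos hi0
        simpa using this

theorem my_gram_posdef {n N : ℕ} (hN : 1 ≤ N) {A : Matrix (Fin n) (Fin n) ℝ}
    {B : Fin n → ℝ} (hB : B ≠ 0) {Q P : Matrix (Fin n) (Fin n) ℝ}
    (hQ : Q.PosDef) (hP : P.PosDef)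
    {S : Matrix (Fin N × Fin n) (Fin N × Fin n) ℝ} (hSsq : S * S = Qbar n N Q P)
    {G : Matrix (Fin N × Fin n) (Fin N) ℝ} (hG : G = S * Phi n N A B) :
    (Gᵀ * G).PosDef := by
  have hSdet : IsUnit S.det := by
    have h2 : S.det * S.det = (Qbar n N Q P).det := by rw [← Matrix.det_mul, hSsq]
    have := (my_qbar_posdef hN hQ hP).det_pos
    refine isUnit_iff_ne_zero.mpr fun h => ?_
    rw [h, mul_zero] at h2
    linarith [h2 ▸ this]
  refine Matrix.PosDef.of_dotProduct_mulVec_pos ?_ ?_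
  · refine my_isHermitian_of_transpose ?_
    rw [Matrix.transpose_mul, Matrix.transpose_transpose]
  · intro z hz
    simp only [star_trivial]
    have hGz : (G *ᵥ z) ⬝ᵥ (G *ᵥ z) = z ⬝ᵥ ((Gᵀ * G) *ᵥ z) := by
      rw [my_dp, mulVec_mulVec]
    rw [← hGz]
    refine my_dotProduct_self_pos ?_
    rw [hG, ← mulVec_mulVec]
    intro hc
    have hphi : Phi n N A B *ᵥ z = 0 := by
      have hinj := Matrix.mulVec_injective_iff_isUnit.mpr ((Matrix.isUnit_iff_isUnit_det S).mpr hSdet)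
      have h0 : S *ᵥ (Phi n N A B *ᵥ z) = S *ᵥ 0 := by rw [mulVec_zero]; exact hc
      exact hinj h0
    exact hz (my_phi_inj A hB hphi)

/-- Open-loop bound, geometric decay: Under the same hypotheses,
`ρ := 1 − λ_min(QP⁻¹) ∈ [0,1)` and `c := (1−ρ)⁻¹(1−ρ^N)c₁ > 0` satisfy, for
every `x`, every `u ∈ F_W(x)` and the associated predicted states:
`V(x'_i) ≤ ρ^i V(x) + c · xᵀℰx` for all `i = 1,…,N`. -/
theorem open_loop_bound_geometric {n N : ℕ} (hN : 1 ≤ N)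
    (A : Matrix (Fin n) (Fin n) ℝ) (B : Fin n → ℝ) (hB : B ≠ 0)
    (Q P : Matrix (Fin n) (Fin n) ℝ) (hQ : Q.PosDef) (hP : P.PosDef)
    (hRic : Riccati A P Q B)
    (S : Matrix (Fin N × Fin n) (Fin N × Fin n) ℝ)
    (hS : S.PosSemidef) (hSsq : S * S = Qbar n N Q P)
    (G : Matrix (Fin N × Fin n) (Fin N) ℝ) (hG : G = S * Phi n N A B)
    (H : Matrix (Fin N × Fin n) (Fin n) ℝ) (hH : H = -(S * Upsilon n N A))
    (W : Matrix (Fin n) (Fin n) ℝ) (hW : (W - (P - Q)).PosDef)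
    (x : Fin n → ℝ) (u : Fin N → ℝ) (hu : u ∈ Feas G H W x)
    (xs : ℕ → Fin n → ℝ) (hx0 : xs 0 = x)
    (hstep : ∀ i : Fin N, xs ((i : ℕ) + 1) = A *ᵥ xs i + u i • B) :
    0 ≤ rhoConst Q P ∧ rhoConst Q P < 1 ∧ 0 < cConst n N A P Q B G ∧
      ∀ i : ℕ, 1 ≤ i → i ≤ N →
        Vfun P (xs i) ≤ rhoConst Q P ^ i * Vfun P x +
          cConst n N A P Q B G * (x ⬝ᵥ ((W - (P - Q)) *ᵥ x)) := by
  -- basic positivity facts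
  have hn : 0 < n := by
    rcases Function.ne_iff.mp hB with ⟨r, hr⟩
    exact r.pos
  have hR : 0 < B ⬝ᵥ (P *ᵥ B) := by
    have := hP.dotProduct_mulVec_pos hB
    simpa using this
  set R := B ⬝ᵥ (P *ᵥ B) with hRdef
  have hRne : R ≠ 0 := ne_of_gt hR
  have hPQ : ∀ z : Fin n → ℝ, 0 ≤ z ⬝ᵥ (P *ᵥ z) - z ⬝ᵥ (Q *ᵥ z) :=
    my_pq_nonneg hP.posSemidef hRic hRne
  obtain ⟨hrho0, hrho1, hdecay⟩ := my_rho_facts hn hQ hP hPQ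
  have hGram : (Gᵀ * G).PosDef := my_gram_posdef hN hB hQ hP hSsq hG
  set E := x ⬝ᵥ ((W - (P - Q)) *ᵥ x) with hEdef
  have hEnn : 0 ≤ E := by
    have := hW.posSemidef.dotProduct_mulVec_nonneg x
    simpa [hEdef] using this
  have hEexp : E = x ⬝ᵥ (W *ᵥ x) - (x ⬝ᵥ (P *ᵥ x) - x ⬝ᵥ (Q *ᵥ x)) := by
    rw [hEdef, Matrix.sub_mulVec, Matrix.sub_mulVec, dotProduct_sub, dotProduct_sub]
  -- cost identity along the trajectory
  have hblocks := my_blocks_full A B u xs hstep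
  have hJ : Jcost G H x u = x ⬝ᵥ (P *ᵥ x) - x ⬝ᵥ (Q *ᵥ x)
      + ∑ k : Fin N, R * (u k + R⁻¹ * (B ⬝ᵥ (P *ᵥ (A *ᵥ xs (k : ℕ)))))^2 := by
    have hGH : G *ᵥ u - H *ᵥ x = S *ᵥ (Phi n N A B *ᵥ u + Upsilon n N A *ᵥ xs 0) := by
      rw [hG, hH, hx0, Matrix.neg_mulVec, sub_neg_eq_add, ← mulVec_mulVec, ← mulVec_mulVec,
        ← mulVec_add]
    set zz := Phi n N A B *ᵥ u + Upsilon n N A *ᵥ xs 0 with hzz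
    calc Jcost G H x u = (S *ᵥ zz) ⬝ᵥ (S *ᵥ zz) := by rw [Jcost, hGH]
      _ = zz ⬝ᵥ (Qbar n N Q P *ᵥ zz) := by
          rw [my_dp, my_herm_transpose hS.1, mulVec_mulVec, hSsq]
      _ = ∑ i : Fin N, (fun s => zz (i, s)) ⬝ᵥ
            ((if (i : ℕ) = N - 1 then P else Q) *ᵥ (fun s => zz (i, s))) := my_qbar_quad Q P zz
      _ = ∑ i : Fin N, (xs ((i : ℕ) + 1)) ⬝ᵥ
            ((if (i : ℕ) = N - 1 then P else Q) *ᵥ (xs ((i : ℕ) + 1))) := by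
          refine Finset.sum_congr rfl fun i _ => ?_
          have hfz : (fun s => zz (i, s)) = xs ((i : ℕ) + 1) := funext fun s => hblocks i s
          rw [hfz]
      _ = xs 0 ⬝ᵥ (P *ᵥ xs 0) - xs 0 ⬝ᵥ (Q *ᵥ xs 0) +
            ∑ k : Fin N, R * (u k + R⁻¹ * (B ⬝ᵥ (P *ᵥ (A *ᵥ xs (k : ℕ)))))^2 :=
          my_master hN hP.1 hRic hRne xs u hstep
      _ = _ := by rw [hx0]
  have hfeas : Jcost G H x u ≤ x ⬝ᵥ (W *ᵥ x) := hu
  have hsumw : ∑ k : Fin N, R * (u k + R⁻¹ * (B ⬝ᵥ (P *ᵥ (A *ᵥ xs (k : ℕ)))))^2 ≤ E := by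
    rw [hEexp]; linarith
  -- the delta trajectory
  set wn : ℕ → ℝ := fun k =>
    if h : k < N then u ⟨k, h⟩ + R⁻¹ * (B ⬝ᵥ (P *ᵥ (A *ᵥ xs k))) else 0 with hwn
  have hwnk : ∀ k : Fin N, wn (k : ℕ) = u k + R⁻¹ * (B ⬝ᵥ (P *ᵥ (A *ᵥ xs (k : ℕ)))) := by
    intro k
    simp [hwn, k.isLt]
  set dl : ℕ → Fin n → ℝ := fun k => Nat.rec (0 : Fin n → ℝ)
    (fun k d => A *ᵥ d + (wn k - R⁻¹ * (B ⬝ᵥ (P *ᵥ (A *ᵥ d)))) • B) k with hdl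
  have hdl0 : dl 0 = 0 := rfl
  set ε : Fin N → ℝ := fun k => wn (k : ℕ) - R⁻¹ * (B ⬝ᵥ (P *ᵥ (A *ᵥ dl (k : ℕ)))) with hεdef
  have hdstep : ∀ k : Fin N, dl ((k : ℕ) + 1) = A *ᵥ dl (k : ℕ) + ε k • B := fun k => rfl
  have hω : ∀ k : Fin N, ε k + R⁻¹ * (B ⬝ᵥ (P *ᵥ (A *ᵥ dl (k : ℕ)))) = wn (k : ℕ) := by
    intro k
    simp [hεdef]
  -- quadratic of Gram at ε equals the w-sum
  have hphid : ∀ (i : Fin N) (s : Fin n), (Phi n N A B *ᵥ ε) (i, s) = dl ((i : ℕ) + 1) s := by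
    intro i s
    have h1 := my_blocks_full A B ε dl hdstep i s
    rw [hdl0, mulVec_zero] at h1
    simpa using h1
  have hPB : ∀ i : Fin N, PhiBlock n N A B i *ᵥ ε = dl ((i : ℕ) + 1) := by
    intro i
    funext s
    exact hphid i s
  have hGramquad : ε ⬝ᵥ ((Gᵀ * G) *ᵥ ε) = ∑ k : Fin N, R * (wn (k : ℕ))^2 := by
    have h1 : ε ⬝ᵥ ((Gᵀ * G) *ᵥ ε) = (G *ᵥ ε) ⬝ᵥ (G *ᵥ ε) := by
      rw [my_dp, mulVec_mulVec]
    have h2 : G *ᵥ ε = S *ᵥ (Phi n N A B *ᵥ ε) := by rw [hG, ← mulVec_mulVec]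
    calc ε ⬝ᵥ ((Gᵀ * G) *ᵥ ε) = (S *ᵥ (Phi n N A B *ᵥ ε)) ⬝ᵥ (S *ᵥ (Phi n N A B *ᵥ ε)) := by
          rw [h1, h2]
      _ = (Phi n N A B *ᵥ ε) ⬝ᵥ (Qbar n N Q P *ᵥ (Phi n N A B *ᵥ ε)) := by
          rw [my_dp, my_herm_transpose hS.1, mulVec_mulVec, hSsq]
      _ = ∑ i : Fin N, (dl ((i : ℕ) + 1)) ⬝ᵥ
            ((if (i : ℕ) = N - 1 then P else Q) *ᵥ (dl ((i : ℕ) + 1))) := by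
          rw [my_qbar_quad]
          refine Finset.sum_congr rfl fun i _ => ?_
          have hfz : (fun s => (Phi n N A B *ᵥ ε) (i, s)) = dl ((i : ℕ) + 1) :=
            funext fun s => hphid i s
          rw [hfz]
      _ = dl 0 ⬝ᵥ (P *ᵥ dl 0) - dl 0 ⬝ᵥ (Q *ᵥ dl 0) +
            ∑ k : Fin N, R * (ε k + R⁻¹ * (B ⬝ᵥ (P *ᵥ (A *ᵥ dl (k : ℕ)))))^2 :=
          my_master hN hP.1 hRic hRne dl ε hdstep
      _ = ∑ k : Fin N, R * (wn (k : ℕ))^2 := by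
          rw [hdl0]
          simp only [mulVec_zero, dotProduct_zero, sub_zero, zero_add]
          refine Finset.sum_congr rfl fun k _ => ?_
          rw [hω k]
  -- c₁ facts
  have hC1 : ∀ i : Fin N,
      sSup (spectrum ℝ ((PhiBlock n N A B i)ᵀ * P * PhiBlock n N A B i * (Gᵀ * G)⁻¹))
        ≤ c1const n N A P B G := by
    intro i
    have := le_ciSup (f := fun i : Fin N => sSup (spectrum ℝ
      ((PhiBlock n N A B i)ᵀ * P * PhiBlock n N A B i * (Gᵀ * G)⁻¹)))
      (Set.Finite.bddAbove (Set.finite_range _)) i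
    exact this
  have hThermitian : ∀ i : Fin N,
      ((PhiBlock n N A B i)ᵀ * P * PhiBlock n N A B i).IsHermitian := by
    intro i
    refine my_isHermitian_of_transpose ?_
    rw [Matrix.transpose_mul, Matrix.transpose_mul, Matrix.transpose_transpose,
      my_herm_transpose hP.1, Matrix.mul_assoc]
  have hTquad : ∀ i : Fin N,
      ε ⬝ᵥ (((PhiBlock n N A B i)ᵀ * P * PhiBlock n N A B i) *ᵥ ε)
        = dl ((i : ℕ) + 1) ⬝ᵥ (P *ᵥ dl ((i : ℕ) + 1)) := by
    intro i
    conv_rhs => rw [← hPB i]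
    rw [my_dp, mulVec_mulVec, mulVec_mulVec]
  -- positivity of c₁
  have hc1pos : 0 < c1const n N A P B G := by
    set i0 : Fin N := ⟨0, hN⟩ with hi0
    set e0 : Fin N → ℝ := Pi.single i0 1 with he0
    have he0ne : e0 ≠ 0 := by
      intro h
      have := congrFun h i0
      simp [he0] at this
    have hPBe0 : PhiBlock n N A B i0 *ᵥ e0 = B := by
      funext r
      rw [Matrix.mulVec_single]
      simp [PhiBlock, Phi, hi0]
    have hquad : e0 ⬝ᵥ (((PhiBlock n N A B i0)ᵀ * P * PhiBlock n N A B i0) *ᵥ e0) = R := by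
      have h1 : (PhiBlock n N A B i0 *ᵥ e0) ⬝ᵥ (P *ᵥ (PhiBlock n N A B i0 *ᵥ e0))
          = e0 ⬝ᵥ (((PhiBlock n N A B i0)ᵀ * P * PhiBlock n N A B i0) *ᵥ e0) := by
        rw [my_dp, mulVec_mulVec, mulVec_mulVec]
      rw [← h1, hPBe0]
    have h2 := my_ratio_sup (hThermitian i0) hGram e0
    rw [hquad] at h2
    have hg0 : 0 < e0 ⬝ᵥ ((Gᵀ * G) *ᵥ e0) := by
      have := hGram.dotProduct_mulVec_pos he0ne
      simpa using this
    have hssup : 0 < sSup (spectrum ℝ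
        ((PhiBlock n N A B i0)ᵀ * P * PhiBlock n N A B i0 * (Gᵀ * G)⁻¹)) := by
      nlinarith
    exact lt_of_lt_of_le hssup (hC1 i0)
  -- key term bound
  have hterm : ∀ k : Fin N, R * (wn (k : ℕ))^2 ≤ c1const n N A P B G * E := by
    intro k
    have hsq := my_step_quad hP.1 hRic hRne (dl (k : ℕ)) (ε k)
    rw [← hdstep k, hω k, ← hRdef] at hsq
    have h1 : R * (wn (k : ℕ))^2 ≤ dl ((k : ℕ) + 1) ⬝ᵥ (P *ᵥ dl ((k : ℕ) + 1)) := by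
      have := hPQ (dl (k : ℕ))
      rw [hsq]
      linarith
    have h2 := my_ratio_sup (hThermitian k) hGram ε
    rw [hTquad k, hGramquad] at h2
    have h3 : ∑ j : Fin N, R * (wn (j : ℕ))^2 ≤ E := by
      calc ∑ j : Fin N, R * (wn (j : ℕ))^2
          = ∑ j : Fin N, R * (u j + R⁻¹ * (B ⬝ᵥ (P *ᵥ (A *ᵥ xs (j : ℕ)))))^2 := by
            refine Finset.sum_congr rfl fun j _ => ?_
            rw [hwnk j]
        _ ≤ E := hsumw
    calc R * (wn (k : ℕ))^2 ≤ dl ((k : ℕ) + 1) ⬝ᵥ (P *ᵥ dl ((k : ℕ) + 1)) := h1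
      _ ≤ sSup (spectrum ℝ ((PhiBlock n N A B k)ᵀ * P * PhiBlock n N A B k * (Gᵀ * G)⁻¹))
            * (∑ j : Fin N, R * (wn (j : ℕ))^2) := h2
      _ ≤ c1const n N A P B G * (∑ j : Fin N, R * (wn (j : ℕ))^2) := by
          refine mul_le_mul_of_nonneg_right (hC1 k) ?_
          exact Finset.sum_nonneg fun j _ => mul_nonneg hR.le (sq_nonneg _)
      _ ≤ c1const n N A P B G * E := mul_le_mul_of_nonneg_left h3 hc1pos.le
  have hcpos : 0 < cConst n N A P Q B G := by
    rw [cConst]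
    have h1 : 0 < 1 - rhoConst Q P := by linarith
    have h2 : rhoConst Q P ^ N < 1 := pow_lt_one₀ hrho0 hrho1 (by omega)
    exact mul_pos (mul_pos (inv_pos.mpr h1) (by linarith)) hc1pos
  refine ⟨hrho0, hrho1, hcpos, ?_⟩
  have hVdef : ∀ v : Fin n → ℝ, Vfun P v = v ⬝ᵥ (P *ᵥ v) := fun v => rfl
  have hstepV : ∀ k : Fin N,
      Vfun P (xs ((k : ℕ) + 1)) ≤ rhoConst Q P * Vfun P (xs (k : ℕ))
        + c1const n N A P B G * E := by
    intro k
    have hsq := my_step_quad hP.1 hRic hRne (xs (k : ℕ)) (u k)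
    rw [← hstep k, ← hRdef] at hsq
    have hd := hdecay (xs (k : ℕ))
    have ht := hterm k
    rw [hwnk k] at ht
    rw [hVdef, hVdef, hsq]
    linarith
  have Hind : ∀ i : ℕ, i ≤ N → Vfun P (xs i) ≤ rhoConst Q P ^ i * Vfun P x
      + (∑ j ∈ Finset.range i, rhoConst Q P ^ j) * (c1const n N A P B G * E) := by
    intro i
    induction i with
    | zero => intro _; simp [hx0]
    | succ i ih =>
      intro hiN
      have hlt : i < N := by omega
      have hih := ih (by omega)
      have hsV := hstepV ⟨i, hlt⟩
      have hc : ((⟨i, hlt⟩ : Fin N) : ℕ) = i := rfl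
      rw [hc] at hsV
      have hmul : rhoConst Q P * Vfun P (xs i) ≤ rhoConst Q P *
          (rhoConst Q P ^ i * Vfun P x
            + (∑ j ∈ Finset.range i, rhoConst Q P ^ j) * (c1const n N A P B G * E)) :=
        mul_le_mul_of_nonneg_left hih hrho0
      have hgs : ∑ j ∈ Finset.range (i + 1), rhoConst Q P ^ j
          = rhoConst Q P * ∑ j ∈ Finset.range i, rhoConst Q P ^ j + 1 := geom_sum_succ
      rw [hgs]
      calc Vfun P (xs (i + 1))
          ≤ rhoConst Q P * Vfun P (xs i) + c1const n N A P B G * E := hsV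
        _ ≤ rhoConst Q P * (rhoConst Q P ^ i * Vfun P x
              + (∑ j ∈ Finset.range i, rhoConst Q P ^ j) * (c1const n N A P B G * E))
              + c1const n N A P B G * E := by linarith
        _ = rhoConst Q P ^ (i + 1) * Vfun P x
              + (rhoConst Q P * ∑ j ∈ Finset.range i, rhoConst Q P ^ j + 1)
                * (c1const n N A P B G * E) := by ring
  intro i hi1 hiN
  have hH := Hind i hiN
  clear hstepV Hind hterm hGramquad hphid hPB hdstep hω hwnk hblocks hJ hfeas hsumw
    hC1 hThermitian hTquad hVdef hdl0 hεdef
  clear_value dl ε wn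
  clear dl ε wn hdl hwn
  have h1 : 0 < 1 - rhoConst Q P := by linarith
  have hgeom : (∑ j ∈ Finset.range i, rhoConst Q P ^ j)
      ≤ (1 - rhoConst Q P)⁻¹ * (1 - rhoConst Q P ^ N) := by
    have hsub : (∑ j ∈ Finset.range i, rhoConst Q P ^ j)
        ≤ ∑ j ∈ Finset.range N, rhoConst Q P ^ j :=
      Finset.sum_le_sum_of_subset_of_nonneg (Finset.range_subset_range.mpr hiN)
        (fun j _ _ => pow_nonneg hrho0 j)
    have hgsm : (∑ j ∈ Finset.range N, rhoConst Q P ^ j) * (rhoConst Q P - 1)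
        = rhoConst Q P ^ N - 1 := geom_sum_mul _ N
    have heq : (∑ j ∈ Finset.range N, rhoConst Q P ^ j)
        = (1 - rhoConst Q P)⁻¹ * (1 - rhoConst Q P ^ N) := by
      rw [inv_mul_eq_div, eq_div_iff (ne_of_gt h1)]
      linear_combination (-1 : ℝ) * hgsm
    linarith
  have hc1E : 0 ≤ c1const n N A P B G * E := mul_nonneg hc1pos.le hEnn
  have hfinal : (∑ j ∈ Finset.range i, rhoConst Q P ^ j) * (c1const n N A P B G * E)
      ≤ (1 - rhoConst Q P)⁻¹ * (1 - rhoConst Q P ^ N) * (c1const n N A P B G * E) :=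
    mul_le_mul_of_nonneg_right hgeom hc1E
  have hcE : cConst n N A P Q B G * E
      = (1 - rhoConst Q P)⁻¹ * (1 - rhoConst Q P ^ N) * (c1const n N A P B G * E) := by
    rw [cConst]; ring
  rw [hcE]
  linarith
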